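/- arXiv:1005.1156 — 4 statements merged into one kernel-verified Lean document; each statement's English description precedes it below -/
import Mathlib

section
/- Let r ≥ 1 be an integer. For each 1 ≤ i ≤ r let e_i be a positive integer, h_i an integer with gcd(h_i, e_i) = 1, and let u_i and w_i be integers. Then there exists exactly one tuple of integers (j_1, …, j_r) with 0 ≤ j_i < e_i for all i, such that the rational number Σ_{i=1}^r [ (u_i + j_i·w_i)/(e_1⋯e_{i−1}) + j_i·h_i/(e_1⋯e_i) ] is congruent to 1/(e_1⋯e_r) modulo ℤ (i.e. their difference is an integer). -/
/-- Unique solution in `[0, e)` of `x * h ≡ b (mod e)` when `gcd(h,e)=1`. -/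
private lemma key_lemma (e h b : ℤ) (he : 0 < e) (hc : IsCoprime h e) :
    ∃! x : ℤ, (0 ≤ x ∧ x < e) ∧ e ∣ (x * h - b) := by
  have hcs := hc.symm
  obtain ⟨c, d, hcd⟩ := hc
  have hq := Int.emod_def (c * b) e
  refine ⟨(c * b) % e, ⟨⟨Int.emod_nonneg _ he.ne', Int.emod_lt_of_pos _ he⟩,
    ⟨-(d * b) - (c * b / e) * h, by linear_combination h * hq + b * hcd⟩⟩, ?_⟩
  rintro y ⟨⟨hy0, hy1⟩, hyd⟩
  have hx0 : 0 ≤ (c * b) % e := Int.emod_nonneg _ he.ne'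
  have hx1 : (c * b) % e < e := Int.emod_lt_of_pos _ he
  have hxd : e ∣ ((c * b) % e) * h - b :=
    ⟨-(d * b) - (c * b / e) * h, by linear_combination h * hq + b * hcd⟩
  have hdvd : e ∣ (y - (c * b) % e) * h := by
    have := dvd_sub hyd hxd
    have heq : (y * h - b) - (((c * b) % e) * h - b) = (y - (c * b) % e) * h := by ring
    rwa [heq] at this
  have hdvd2 : e ∣ y - (c * b) % e := hcs.dvd_of_dvd_mul_right hdvd
  obtain ⟨k, hk⟩ := hdvd2
  have hk0 : k = 0 := by
    rcases lt_trichotomy k 0 with hlt | h0 | hgt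
    · have : e * k ≤ e * (-1) := by
        apply mul_le_mul_of_nonneg_left (by omega) he.le
      nlinarith
    · exact h0
    · have : e * 1 ≤ e * k := by
        apply mul_le_mul_of_nonneg_left (by omega) he.le
      nlinarith
  rw [hk0, mul_zero] at hk
  linarith

private lemma sum_split {r : ℕ} (e h u w j : Fin (r + 1) → ℤ) :
    (∑ i, ((u i + j i * w i) * e i + j i * h i) * ∏ k ∈ Finset.Ioi i, e k)
      = ((u 0 + j 0 * w 0) * e 0 + j 0 * h 0) * (∏ i : Fin r, e i.succ)
        + ∑ i : Fin r, ((u i.succ + j i.succ * w i.succ) * e i.succ + j i.succ * h i.succ)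
            * ∏ k ∈ Finset.Ioi i, e k.succ := by
  rw [Fin.sum_univ_succ]
  simp only [Fin.prod_Ioi_zero, Fin.prod_Ioi_succ]

private lemma aux_lemma : ∀ (r : ℕ) (e h u w : Fin r → ℤ), (∀ i, 0 < e i) →
    (∀ i, Int.gcd (h i) (e i) = 1) → ∀ a : ℤ,
    ∃! j : Fin r → ℤ, (∀ i, 0 ≤ j i ∧ j i < e i) ∧
      (∏ i, e i) ∣
        ((∑ i, ((u i + j i * w i) * e i + j i * h i) * ∏ k ∈ Finset.Ioi i, e k) - a) := by
  intro r
  induction r with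
  | zero =>
    intro e h u w he hcop a
    refine ⟨Fin.elim0, ⟨fun i => i.elim0, ?_⟩, fun y _ => funext fun i => i.elim0⟩
    simp
  | succ r ih =>
    intro e h u w he hcop a
    obtain ⟨j', ⟨hj'lt, m, hm⟩, hj'uniq⟩ := ih (fun i => e i.succ) (fun i => h i.succ)
      (fun i => u i.succ) (fun i => w i.succ) (fun i => he i.succ) (fun i => hcop i.succ) a
    obtain ⟨x, ⟨⟨hx0, hx1⟩, hxdvd⟩, hxuniq⟩ := key_lemma (e 0) (h 0) (-m) (he 0)
      (Int.isCoprime_iff_gcd_eq_one.mpr (hcop 0))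
    set E' : ℤ := ∏ i : Fin r, e i.succ with hE'
    have hE'pos : 0 < E' := Finset.prod_pos fun i _ => he i.succ
    have hEdec : (∏ i : Fin (r+1), e i) = e 0 * E' := Fin.prod_univ_succ e
    refine ⟨Fin.cons x j', ⟨?_, ?_⟩, ?_⟩
    · intro i
      refine Fin.cases ?_ ?_ i
      · simpa using ⟨hx0, hx1⟩
      · intro i'; simpa using hj'lt i'
    · -- divisibility for the constructed j
      rw [sum_split, hEdec]
      simp only [Fin.cons_zero, Fin.cons_succ]
      obtain ⟨k, hk⟩ := hxdvd
      refine ⟨u 0 + x * w 0 + k, ?_⟩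
      have hm' : (∑ i : Fin r, ((u i.succ + j' i * w i.succ) * e i.succ + j' i * h i.succ)
          * ∏ k ∈ Finset.Ioi i, e k.succ) - a = E' * m := hm
      linear_combination hm' + E' * hk
    · rintro y ⟨hylt, hydvd⟩
      rw [sum_split, hEdec] at hydvd
      -- tail of y satisfies the inductive predicate
      have htail : (fun i : Fin r => y i.succ) = j' := by
        apply hj'uniq
        refine ⟨fun i => hylt i.succ, ?_⟩
        have h1 : E' ∣ ((u 0 + y 0 * w 0) * e 0 + y 0 * h 0) * E'
            + ((∑ i : Fin r, ((u i.succ + y i.succ * w i.succ) * e i.succ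
                + y i.succ * h i.succ) * ∏ k ∈ Finset.Ioi i, e k.succ) - a) := by
          have := dvd_trans (Dvd.intro_left (e 0) rfl) hydvd
          rw [add_sub_assoc']
          exact this
        have h2 : E' ∣ ((u 0 + y 0 * w 0) * e 0 + y 0 * h 0) * E' := Dvd.intro_left _ rfl
        simpa using (dvd_sub h1 h2)
      have hm2 : (∑ i : Fin r, ((u i.succ + y i.succ * w i.succ) * e i.succ
          + y i.succ * h i.succ) * ∏ k ∈ Finset.Ioi i, e k.succ) - a = E' * m := by
        have := hm
        simp only [← htail] at this ⊢
        exact this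
      have hdvd0 : e 0 ∣ y 0 * h 0 - (-m) := by
        have h3 : e 0 * E' ∣ E' * ((u 0 + y 0 * w 0) * e 0 + y 0 * h 0 + m) := by
          convert hydvd using 1
          linear_combination -hm2
        have h4 : e 0 ∣ (u 0 + y 0 * w 0) * e 0 + y 0 * h 0 + m := by
          rcases h3 with ⟨k, hk⟩
          refine ⟨k, ?_⟩
          have hne : E' ≠ 0 := hE'pos.ne'
          have : E' * ((u 0 + y 0 * w 0) * e 0 + y 0 * h 0 + m) = E' * (e 0 * k) := by
            linear_combination hk
          exact mul_left_cancel₀ hne this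
        rcases h4 with ⟨k, hk⟩
        exact ⟨k - (u 0 + y 0 * w 0), by linear_combination hk⟩
      have hy0 : y 0 = x := hxuniq (y 0) ⟨⟨(hylt 0).1, (hylt 0).2⟩, hdvd0⟩
      funext i
      refine Fin.cases ?_ ?_ i
      · simpa using hy0
      · intro i'
        have := congrFun htail i'
        simpa using this

private lemma prod_split {r : ℕ} (f : Fin r → ℚ) (i : Fin r) :
    (∏ k, f k) = (∏ k ∈ Finset.Iio i, f k) * f i * ∏ k ∈ Finset.Ioi i, f k := by
  have huniv : Finset.Iio i ∪ Finset.Ici i = Finset.univ := by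
    ext x; simp [lt_or_ge]
  have hdisj : Disjoint (Finset.Iio i) (Finset.Ici i) := by
    rw [Finset.disjoint_left]
    intro x hx hx'
    simp only [Finset.mem_Iio] at hx
    simp only [Finset.mem_Ici] at hx'
    exact absurd hx' (not_le.mpr hx)
  rw [← huniv, Finset.prod_union hdisj, ← Finset.mul_prod_Ioi_eq_prod_Ici, mul_assoc]

/-- Uniqueness and existence of the tuple of exponents `(j_1, …, j_r)` with
`0 ≤ j_i < e_i` such that
`Σ_i [ (u_i + j_i·w_i)/(e_1⋯e_{i−1}) + j_i·h_i/(e_1⋯e_i) ] ≡ 1/(e_1⋯e_r) (mod ℤ)`. -/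
theorem stmt0 (r : ℕ) (hr : 1 ≤ r) (e : Fin r → ℤ) (he : ∀ i, 0 < e i)
    (h : Fin r → ℤ) (hcop : ∀ i, Int.gcd (h i) (e i) = 1) (u w : Fin r → ℤ) :
    ∃! j : Fin r → ℤ,
      (∀ i, 0 ≤ j i ∧ j i < e i) ∧
      ∃ z : ℤ,
        (∑ i : Fin r,
            (((u i + j i * w i : ℤ) : ℚ) / (∏ k ∈ Finset.Iio i, ((e k : ℤ) : ℚ)) +
              ((j i * h i : ℤ) : ℚ) /
                ((∏ k ∈ Finset.Iio i, ((e k : ℤ) : ℚ)) * ((e i : ℤ) : ℚ)))) -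
          1 / (∏ i : Fin r, ((e i : ℤ) : ℚ)) = (z : ℚ) := by
  have hmain := aux_lemma r e h u w he hcop 1
  have hEcast : ((∏ i : Fin r, e i : ℤ) : ℚ) = ∏ i : Fin r, ((e i : ℤ) : ℚ) :=
    Int.cast_prod _ _
  have hEQ0 : (∏ i : Fin r, ((e i : ℤ) : ℚ)) ≠ 0 :=
    Finset.prod_ne_zero_iff.mpr fun i _ => Int.cast_ne_zero.mpr (he i).ne'
  refine (existsUnique_congr fun j => ?_).mpr hmain
  refine and_congr Iff.rfl ?_
  have hkey : (∑ i : Fin r,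
      (((u i + j i * w i : ℤ) : ℚ) / (∏ k ∈ Finset.Iio i, ((e k : ℤ) : ℚ)) +
        ((j i * h i : ℤ) : ℚ) /
          ((∏ k ∈ Finset.Iio i, ((e k : ℤ) : ℚ)) * ((e i : ℤ) : ℚ)))) *
      (∏ i : Fin r, ((e i : ℤ) : ℚ))
      = ((∑ i, ((u i + j i * w i) * e i + j i * h i) * ∏ k ∈ Finset.Ioi i, e k : ℤ) : ℚ) := by
    rw [Finset.sum_mul, Int.cast_sum]
    refine Finset.sum_congr rfl fun i _ => ?_
    have hPne : (∏ k ∈ Finset.Iio i, ((e k : ℤ) : ℚ)) ≠ 0 :=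
      Finset.prod_ne_zero_iff.mpr fun k _ => Int.cast_ne_zero.mpr (he k).ne'
    have hei : ((e i : ℤ) : ℚ) ≠ 0 := Int.cast_ne_zero.mpr (he i).ne'
    rw [prod_split (fun k => ((e k : ℤ) : ℚ)) i]
    push_cast
    field_simp
  have hδ : (∑ i : Fin r,
      (((u i + j i * w i : ℤ) : ℚ) / (∏ k ∈ Finset.Iio i, ((e k : ℤ) : ℚ)) +
        ((j i * h i : ℤ) : ℚ) /
          ((∏ k ∈ Finset.Iio i, ((e k : ℤ) : ℚ)) * ((e i : ℤ) : ℚ)))) -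
      1 / (∏ i : Fin r, ((e i : ℤ) : ℚ))
      = (((∑ i, ((u i + j i * w i) * e i + j i * h i) * ∏ k ∈ Finset.Ioi i, e k : ℤ) : ℚ) - 1) /
        (∏ i : Fin r, ((e i : ℤ) : ℚ)) := by
    rw [eq_div_iff hEQ0, sub_mul, hkey, one_div_mul_cancel hEQ0]
  rw [hδ]
  constructor
  · rintro ⟨z, hz⟩
    refine ⟨z, ?_⟩
    rw [div_eq_iff hEQ0, ← hEcast, mul_comm] at hz
    exact_mod_cast hz
  · rintro ⟨z, hz⟩
    refine ⟨z, ?_⟩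
    rw [div_eq_iff hEQ0, ← hEcast, mul_comm]
    exact_mod_cast hz
end

section
/- Let K be a number field with ring of integers ℤ_K, let p be a prime number, and let 𝔞 be a nonzero fractional ideal of K such that v_𝔮(𝔞) = 0 for every prime ideal 𝔮 of ℤ_K not lying over p. Set H := ⌈ max_{𝔭 | p} v_𝔭(𝔞)/e(𝔭/p) ⌉. Let α ∈ K^* be an element with v_𝔭(α) = v_𝔭(𝔞) for every prime ideal 𝔭 lying over p and v_𝔮(α) ≥ 0 for every prime ideal 𝔮 not lying over p. Then 𝔞 is the fractional ideal generated by p^H and α, i.e. 𝔞 = p^H·ℤ_K + α·ℤ_K. -/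
open scoped nonZeroDivisors Classical
open IsDedekindDomain NumberField IsDedekindDomain.HeightOneSpectrum FractionalIdeal

/-- The additive `v`-adic valuation of a nonzero element `x` of the fraction field `K`
(the exponent of `v` in the factorization of the principal fractional ideal `xR`),
with junk value `0` at `x = 0`. -/
noncomputable def addVal {R : Type*} [CommRing R] [IsDedekindDomain R]
    {K : Type*} [Field K] [Algebra R K] [IsFractionRing R K]
    (v : HeightOneSpectrum R) (x : K) : ℤ :=
  if h : v.valuation K x = 0 then 0 else - Multiplicative.toAdd (WithZero.unzero h)

section Aux

variable {R : Type*} [CommRing R] [IsDedekindDomain R]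
    {K : Type*} [Field K] [Algebra R K] [IsFractionRing R K]

lemma addVal_eq_count (v : HeightOneSpectrum R) {x : K} (hx : x ≠ 0) :
    addVal v x = FractionalIdeal.count K v (spanSingleton R⁰ x) := by
  obtain ⟨⟨n, d⟩, hx'⟩ := IsLocalization.mk'_surjective R⁰ x
  dsimp only at hx'
  have hn : n ≠ 0 := by
    rintro rfl
    rw [IsLocalization.mk'_zero] at hx'
    exact hx hx'.symm
  have hd0 : (d : R) ≠ 0 := nonZeroDivisors.coe_ne_zero d
  set cn := (Associates.mk v.asIdeal).count (Associates.mk (Ideal.span {n} : Ideal R)).factors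
    with hcn
  set cd := (Associates.mk v.asIdeal).count
    (Associates.mk (Ideal.span {(d : R)} : Ideal R)).factors with hcd
  have hval : v.valuation K x =
      ((Multiplicative.ofAdd ((cd : ℤ) - (cn : ℤ)) : Multiplicative ℤ) :
        WithZero (Multiplicative ℤ)) := by
    rw [← hx', valuation_of_mk', intValuation_if_neg v hn, intValuation_if_neg v hd0,
      WithZero.exp, WithZero.exp, ← WithZero.coe_div,
      WithZero.coe_inj, ← ofAdd_sub]
    congr 1
    ring
  have hspan : spanSingleton R⁰ x =
      spanSingleton R⁰ ((algebraMap R K) (d : R))⁻¹ * ↑(Ideal.span {n} : Ideal R) := by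
    rw [coeIdeal_span_singleton, spanSingleton_mul_spanSingleton, ← hx',
      IsFractionRing.mk'_eq_div, div_eq_mul_inv, mul_comm]
  have hxs : spanSingleton R⁰ x ≠ 0 := by
    rwa [ne_eq, spanSingleton_eq_zero_iff]
  rw [count_well_defined K v hxs hspan, ← hcn, ← hcd]
  have h0 : v.valuation K x ≠ 0 := by rw [hval]; exact WithZero.coe_ne_zero
  rw [addVal, dif_neg h0]
  have : WithZero.unzero h0 = Multiplicative.ofAdd ((cd : ℤ) - (cn : ℤ)) := by
    rw [← WithZero.coe_inj, WithZero.coe_unzero, hval]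
  rw [this, toAdd_ofAdd]
  ring

end Aux

section Aux2

variable {R : Type*} [CommRing R] [IsDedekindDomain R]
    {K : Type*} [Field K] [Algebra R K] [IsFractionRing R K]

lemma my_spanSingleton_zpow (x : K) (n : ℤ) :
    spanSingleton R⁰ (x ^ n) = (spanSingleton R⁰ x) ^ n := by
  obtain ⟨m, rfl | rfl⟩ := n.eq_nat_or_neg
  · rw [zpow_natCast, zpow_natCast, spanSingleton_pow]
  · rw [zpow_neg, zpow_neg, zpow_natCast, zpow_natCast, spanSingleton_pow,
      FractionalIdeal.spanSingleton_inv]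

lemma my_finprod_le_one {d : HeightOneSpectrum R → ℤ} (hd : ∀ v, 0 ≤ d v) :
    ∏ᶠ v : HeightOneSpectrum R, (v.asIdeal : FractionalIdeal R⁰ K) ^ (d v) ≤ 1 := by
  refine finprod_induction (· ≤ 1) le_rfl (fun a b ha hb => ?_) fun v => ?_
  · calc a * b ≤ a * 1 := mul_le_mul_right hb a
    _ = a := mul_one a
    _ ≤ 1 := ha
  · obtain ⟨m, hm⟩ := Int.eq_ofNat_of_zero_le (hd v)
    rw [hm, zpow_natCast, ← coeIdeal_pow]
    exact coeIdeal_le_one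

lemma my_le_of_count_le {I J : FractionalIdeal R⁰ K} (hI : I ≠ 0) (hJ : J ≠ 0)
    (h : ∀ v : HeightOneSpectrum R,
      FractionalIdeal.count K v J ≤ FractionalIdeal.count K v I) : I ≤ J := by
  have hfI : {v : HeightOneSpectrum R | FractionalIdeal.count K v I ≠ 0}.Finite :=
    Filter.eventually_cofinite.mp (FractionalIdeal.finite_factors I)
  have hfJ : {v : HeightOneSpectrum R | FractionalIdeal.count K v J ≠ 0}.Finite :=
    Filter.eventually_cofinite.mp (FractionalIdeal.finite_factors J)
  have hsJ : (Function.mulSupport fun v : HeightOneSpectrum R =>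
      (v.asIdeal : FractionalIdeal R⁰ K) ^ (FractionalIdeal.count K v J)).Finite := by
    refine hfJ.subset fun v hv => ?_
    simp only [Set.mem_setOf_eq]
    intro h0
    simp [Function.mem_mulSupport, h0] at hv
  have hsD : (Function.mulSupport fun v : HeightOneSpectrum R =>
      (v.asIdeal : FractionalIdeal R⁰ K) ^
        (FractionalIdeal.count K v I - FractionalIdeal.count K v J)).Finite := by
    refine (hfI.union hfJ).subset fun v hv => ?_
    simp only [Set.mem_union, Set.mem_setOf_eq]
    by_contra h0
    push_neg at h0
    simp [Function.mem_mulSupport, h0.1, h0.2] at hv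
  calc I = ∏ᶠ v : HeightOneSpectrum R,
        (v.asIdeal : FractionalIdeal R⁰ K) ^ (FractionalIdeal.count K v I) :=
      (FractionalIdeal.finprod_heightOneSpectrum_factorization' K hI).symm
    _ = ∏ᶠ v : HeightOneSpectrum R,
        (v.asIdeal : FractionalIdeal R⁰ K) ^ (FractionalIdeal.count K v J) *
        (v.asIdeal : FractionalIdeal R⁰ K) ^
          (FractionalIdeal.count K v I - FractionalIdeal.count K v J) := by
      refine finprod_congr fun v => ?_
      rw [← zpow_add₀ (coeIdeal_ne_zero.mpr v.ne_bot), add_sub_cancel]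
    _ = (∏ᶠ v : HeightOneSpectrum R,
        (v.asIdeal : FractionalIdeal R⁰ K) ^ (FractionalIdeal.count K v J)) *
        ∏ᶠ v : HeightOneSpectrum R, (v.asIdeal : FractionalIdeal R⁰ K) ^
          (FractionalIdeal.count K v I - FractionalIdeal.count K v J) :=
      finprod_mul_distrib hsJ hsD
    _ ≤ (∏ᶠ v : HeightOneSpectrum R,
        (v.asIdeal : FractionalIdeal R⁰ K) ^ (FractionalIdeal.count K v J)) * 1 :=
      mul_le_mul_right (my_finprod_le_one fun v => sub_nonneg.mpr (h v)) _
    _ = J := by rw [mul_one, FractionalIdeal.finprod_heightOneSpectrum_factorization' K hJ]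

end Aux2

/-- two-element representation `𝔞 = p^H·ℤ_K + α·ℤ_K` of a nonzero fractional
ideal `𝔞` supported at the primes over `p`, where `H = ⌈max_{𝔭|p} v_𝔭(𝔞)/e(𝔭/p)⌉` and
`α ∈ K^*` satisfies `v_𝔭(α) = v_𝔭(𝔞)` for `𝔭 | p` and `v_𝔮(α) ≥ 0` for `𝔮 ∤ p`. -/
theorem stmt5 (K : Type*) [Field K] [NumberField K] (p : ℕ) (hp : p.Prime)
    (𝔞 : FractionalIdeal (nonZeroDivisors (𝓞 K)) K) (h𝔞 : 𝔞 ≠ 0)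
    (hsupp : ∀ Q : HeightOneSpectrum (𝓞 K), (p : 𝓞 K) ∉ Q.asIdeal →
      FractionalIdeal.count K Q 𝔞 = 0)
    (S : Finset (HeightOneSpectrum (𝓞 K)))
    (hS : ∀ Q : HeightOneSpectrum (𝓞 K), Q ∈ S ↔ (p : 𝓞 K) ∈ Q.asIdeal)
    (hSne : S.Nonempty)
    (H : ℤ)
    (hH : H = ⌈S.sup' hSne fun Q =>
      (FractionalIdeal.count K Q 𝔞 : ℚ) / (addVal Q ((p : K)) : ℚ)⌉)
    (α : K) (hα : α ≠ 0)
    (hvα : ∀ Q : HeightOneSpectrum (𝓞 K), (p : 𝓞 K) ∈ Q.asIdeal →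
      addVal Q α = FractionalIdeal.count K Q 𝔞)
    (hvα' : ∀ Q : HeightOneSpectrum (𝓞 K), (p : 𝓞 K) ∉ Q.asIdeal → 0 ≤ addVal Q α) :
    𝔞 = FractionalIdeal.spanSingleton (nonZeroDivisors (𝓞 K)) ((p : K) ^ H) +
      FractionalIdeal.spanSingleton (nonZeroDivisors (𝓞 K)) α := by
  have hpK : (p : K) ≠ 0 := Nat.cast_ne_zero.mpr hp.ne_zero
  have hpR : (p : 𝓞 K) ≠ 0 := Nat.cast_ne_zero.mpr hp.ne_zero
  have hαs : spanSingleton (𝓞 K)⁰ α ≠ 0 := by rwa [ne_eq, spanSingleton_eq_zero_iff]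
  have hpHs : spanSingleton (𝓞 K)⁰ ((p : K) ^ H) ≠ 0 := by
    rw [ne_eq, spanSingleton_eq_zero_iff]
    exact zpow_ne_zero H hpK
  have hspanp0 : (Ideal.span {(p : 𝓞 K)} : Ideal (𝓞 K)) ≠ 0 := by
    rwa [ne_eq, Ideal.zero_eq_bot, Ideal.span_singleton_eq_bot]
  have hspanp : spanSingleton (𝓞 K)⁰ ((p : K)) =
      ((Ideal.span {(p : 𝓞 K)} : Ideal (𝓞 K)) : FractionalIdeal (𝓞 K)⁰ K) := by
    rw [coeIdeal_span_singleton, map_natCast]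
  have hcpH : ∀ Q : HeightOneSpectrum (𝓞 K),
      FractionalIdeal.count K Q (spanSingleton (𝓞 K)⁰ ((p : K) ^ H)) =
        H * addVal Q ((p : K)) := by
    intro Q
    rw [my_spanSingleton_zpow, FractionalIdeal.count_zpow, ← addVal_eq_count Q hpK]
  have hvp_dvd : ∀ Q : HeightOneSpectrum (𝓞 K),
      (addVal Q ((p : K)) ≠ 0 ↔ (p : 𝓞 K) ∈ Q.asIdeal) := by
    intro Q
    rw [addVal_eq_count Q hpK, hspanp, FractionalIdeal.count_coe K Q hspanp0]
    rw [ne_eq, Int.natCast_eq_zero, ← ne_eq,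
      Associates.count_ne_zero_iff_dvd hspanp0 Q.irreducible, Ideal.dvd_span_singleton]
  have hvp_pos : ∀ Q ∈ S, 1 ≤ addVal Q ((p : K)) := by
    intro Q hQ
    have h1 : addVal Q ((p : K)) ≠ 0 := (hvp_dvd Q).mpr ((hS Q).mp hQ)
    have h2 : 0 ≤ addVal Q ((p : K)) := by
      rw [addVal_eq_count Q hpK, hspanp]
      exact FractionalIdeal.count_coe_nonneg K Q _
    omega
  have hvp_zero : ∀ Q : HeightOneSpectrum (𝓞 K), Q ∉ S → addVal Q ((p : K)) = 0 := by
    intro Q hQ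
    by_contra h
    exact hQ ((hS Q).mpr ((hvp_dvd Q).mp h))
  set B := spanSingleton (𝓞 K)⁰ ((p : K) ^ H) + spanSingleton (𝓞 K)⁰ α with hBdef
  have hαB : spanSingleton (𝓞 K)⁰ α ≤ B := by
    rw [hBdef, ← sup_eq_add]; exact le_sup_right
  have hpHB : spanSingleton (𝓞 K)⁰ ((p : K) ^ H) ≤ B := by
    rw [hBdef, ← sup_eq_add]; exact le_sup_left
  have hB0 : B ≠ 0 := by
    intro h
    exact hαs (FractionalIdeal.le_zero_iff.mp (h ▸ hαB))
  have hle_α : spanSingleton (𝓞 K)⁰ α ≤ 𝔞 := by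
    refine my_le_of_count_le hαs h𝔞 fun Q => ?_
    rw [← addVal_eq_count Q hα]
    by_cases hQ : (p : 𝓞 K) ∈ Q.asIdeal
    · rw [hvα Q hQ]
    · rw [hsupp Q hQ]; exact hvα' Q hQ
  have hle_pH : spanSingleton (𝓞 K)⁰ ((p : K) ^ H) ≤ 𝔞 := by
    refine my_le_of_count_le hpHs h𝔞 fun Q => ?_
    rw [hcpH Q]
    by_cases hQ : Q ∈ S
    · have he := hvp_pos Q hQ
      have heQ : (0 : ℚ) < (addVal Q ((p : K)) : ℚ) := by exact_mod_cast he
      have hsup : ((FractionalIdeal.count K Q 𝔞 : ℚ) / (addVal Q ((p : K)) : ℚ)) ≤ (H : ℚ) := by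
        rw [hH]
        exact le_trans (Finset.le_sup' (fun Q => (FractionalIdeal.count K Q 𝔞 : ℚ) /
          (addVal Q ((p : K)) : ℚ)) hQ) (Int.le_ceil _)
      rw [div_le_iff₀ heQ] at hsup
      exact_mod_cast hsup
    · rw [hsupp Q fun h => hQ ((hS Q).mpr h), hvp_zero Q hQ, mul_zero]
  have hBa : B ≤ 𝔞 := by
    rw [hBdef, ← sup_eq_add]
    exact sup_le hle_pH hle_α
  have hcount_eq : ∀ Q : HeightOneSpectrum (𝓞 K),
      FractionalIdeal.count K Q 𝔞 = FractionalIdeal.count K Q B := by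
    intro Q
    refine le_antisymm (FractionalIdeal.count_mono K Q hB0 hBa) ?_
    by_cases hQ : (p : 𝓞 K) ∈ Q.asIdeal
    · calc FractionalIdeal.count K Q B ≤
          FractionalIdeal.count K Q (spanSingleton (𝓞 K)⁰ α) :=
            FractionalIdeal.count_mono K Q hαs hαB
        _ = FractionalIdeal.count K Q 𝔞 := by rw [← addVal_eq_count Q hα, hvα Q hQ]
    · calc FractionalIdeal.count K Q B ≤
          FractionalIdeal.count K Q (spanSingleton (𝓞 K)⁰ ((p : K) ^ H)) :=
            FractionalIdeal.count_mono K Q hpHs hpHB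
        _ = FractionalIdeal.count K Q 𝔞 := by
            rw [hcpH Q, hvp_zero Q fun h => hQ ((hS Q).mp h), mul_zero, hsupp Q hQ]
  calc 𝔞 = ∏ᶠ Q : HeightOneSpectrum (𝓞 K),
        (Q.asIdeal : FractionalIdeal (𝓞 K)⁰ K) ^ (FractionalIdeal.count K Q 𝔞) :=
      (FractionalIdeal.finprod_heightOneSpectrum_factorization' K h𝔞).symm
    _ = ∏ᶠ Q : HeightOneSpectrum (𝓞 K),
        (Q.asIdeal : FractionalIdeal (𝓞 K)⁰ K) ^ (FractionalIdeal.count K Q B) :=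
      finprod_congr fun Q => by rw [hcount_eq Q]
    _ = B := FractionalIdeal.finprod_heightOneSpectrum_factorization' K hB0
end

section
/- Let K be a number field with ring of integers ℤ_K and let 𝒫 be a finite set of prime numbers. For each p ∈ 𝒫 let 𝔞_p be a nonzero fractional ideal of K with v_𝔮(𝔞_p) = 0 for every prime ideal 𝔮 of ℤ_K not lying over p, let α_p ∈ K^* satisfy v_𝔭(α_p) = v_𝔭(𝔞_p) for every prime ideal 𝔭 lying over p and v_𝔮(α_p) ≥ 0 for every prime ideal 𝔮 not lying over p, and let H_p be an integer with H_p·e(𝔭/p) ≥ v_𝔭(𝔞_p) for every prime ideal 𝔭 lying over p. Then the fractional ideal Π_{p∈𝒫} 𝔞_p equals the fractional ideal generated by the two elements Π_{p∈𝒫} p^{H_p} and Σ_{p∈𝒫} ( Π_{q∈𝒫, q≠p} q^{H_q+1} )·α_p. -/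
open IsDedekindDomain NumberField

local notation "ℤₘ₀" => WithZero (Multiplicative ℤ)

open scoped Classical

section Aux

variable {R : Type*} [CommRing R] [IsDedekindDomain R]
    {K : Type*} [Field K] [Algebra R K] [IsFractionRing R K]
    (v : HeightOneSpectrum R)

theorem valuation_ne_zero {x : K} (hx : x ≠ 0) : v.valuation K x ≠ 0 :=
  (Valuation.ne_zero_iff _).mpr hx

theorem valuation_eq_addVal {x : K} (hx : x ≠ 0) :
    v.valuation K x = ((Multiplicative.ofAdd (-(addVal v x)) : Multiplicative ℤ) : ℤₘ₀) := by
  have h : v.valuation K x ≠ 0 := valuation_ne_zero v hx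
  simp only [addVal, dif_neg h, neg_neg, ofAdd_toAdd, WithZero.coe_unzero]

theorem addVal_eq_of_valuation {x : K} (hx : x ≠ 0) {c : ℤ}
    (h : v.valuation K x = ((Multiplicative.ofAdd (-c) : Multiplicative ℤ) : ℤₘ₀)) :
    addVal v x = c := by
  rw [valuation_eq_addVal v hx] at h
  have := Multiplicative.ofAdd.injective (WithZero.coe_inj.mp h)
  omega

theorem le_addVal_iff {x : K} (hx : x ≠ 0) (c : ℤ) :
    c ≤ addVal v x ↔ v.valuation K x ≤ ((Multiplicative.ofAdd (-c) : Multiplicative ℤ) : ℤₘ₀) := by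
  rw [valuation_eq_addVal v hx, WithZero.coe_le_coe, Multiplicative.ofAdd_le, neg_le_neg_iff]

theorem addVal_le_iff {x : K} (hx : x ≠ 0) (c : ℤ) :
    addVal v x ≤ c ↔ ((Multiplicative.ofAdd (-c) : Multiplicative ℤ) : ℤₘ₀) ≤ v.valuation K x := by
  rw [valuation_eq_addVal v hx, WithZero.coe_le_coe, Multiplicative.ofAdd_le, neg_le_neg_iff]

theorem addVal_one : addVal v (1 : K) = 0 :=
  addVal_eq_of_valuation v one_ne_zero (by rw [Valuation.map_one]; rfl)

theorem addVal_mul {x y : K} (hx : x ≠ 0) (hy : y ≠ 0) :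
    addVal v (x * y) = addVal v x + addVal v y := by
  apply addVal_eq_of_valuation v (mul_ne_zero hx hy)
  rw [Valuation.map_mul, valuation_eq_addVal v hx, valuation_eq_addVal v hy,
    ← WithZero.coe_mul, ← ofAdd_add, neg_add]

theorem addVal_zpow {x : K} (hx : x ≠ 0) (n : ℤ) :
    addVal v (x ^ n) = n * addVal v x := by
  apply addVal_eq_of_valuation v (zpow_ne_zero n hx)
  rw [map_zpow₀, valuation_eq_addVal v hx, ← WithZero.coe_zpow]
  congr 1
  rw [← ofAdd_zsmul, smul_neg, smul_eq_mul]

theorem addVal_prod {ι : Type*} (s : Finset ι) (f : ι → K) (hf : ∀ i ∈ s, f i ≠ 0) :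
    addVal v (∏ i ∈ s, f i) = ∑ i ∈ s, addVal v (f i) := by
  classical
  induction s using Finset.cons_induction with
  | empty => simpa using addVal_one v
  | cons a s ha ih =>
    rw [Finset.prod_cons, Finset.sum_cons,
      addVal_mul v (hf a (Finset.mem_cons_self a s))
        (Finset.prod_ne_zero_iff.mpr fun i hi => hf i (Finset.mem_cons_of_mem hi)),
      ih (fun i hi => hf i (Finset.mem_cons_of_mem hi))]

theorem addVal_algebraMap {a : R} (ha : a ≠ 0) :
    addVal v (algebraMap R K a) =
      ((Associates.mk v.asIdeal).count (Associates.mk (Ideal.span {a})).factors : ℤ) := by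
  classical
  apply addVal_eq_of_valuation v ((map_ne_zero_iff _ (IsFractionRing.injective R K)).mpr ha)
  rw [v.valuation_of_algebraMap, IsDedekindDomain.HeightOneSpectrum.intValuation_apply,
    IsDedekindDomain.HeightOneSpectrum.intValuationDef_if_neg v ha]
  rfl

theorem addVal_algebraMap_nonneg {a : R} (ha : a ≠ 0) :
    0 ≤ addVal v (algebraMap R K a) := by
  classical
  rw [addVal_algebraMap v ha]
  exact_mod_cast Nat.zero_le _

theorem addVal_algebraMap_pos {a : R} (ha : a ≠ 0) (hmem : a ∈ v.asIdeal) :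
    0 < addVal v (algebraMap R K a) := by
  classical
  rw [addVal_algebraMap v ha]
  have hdvd : v.asIdeal ∣ Ideal.span {a} := Ideal.dvd_span_singleton.mpr hmem
  rw [← IsDedekindDomain.HeightOneSpectrum.intValuation_lt_one_iff_dvd] at hdvd
  rw [IsDedekindDomain.HeightOneSpectrum.intValuation_apply, IsDedekindDomain.HeightOneSpectrum.intValuationDef_if_neg v ha] at hdvd
  have h1 : ((Multiplicative.ofAdd
      (-((Associates.mk v.asIdeal).count (Associates.mk (Ideal.span {a})).factors : ℤ)) :
        Multiplicative ℤ) : ℤₘ₀) < ((1 : Multiplicative ℤ) : ℤₘ₀) := by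
    exact hdvd
  have h2 := WithZero.coe_lt_coe.mp h1
  rw [show ((1:Multiplicative ℤ)) = Multiplicative.ofAdd 0 from rfl] at h2
  have h3 := Multiplicative.ofAdd_lt.mp h2
  omega

theorem addVal_algebraMap_eq_zero {a : R} (ha : a ≠ 0) (hmem : a ∉ v.asIdeal) :
    addVal v (algebraMap R K a) = 0 := by
  classical
  rcases (addVal_algebraMap_nonneg (K := K) v ha).lt_or_eq with h | h
  · exfalso
    apply hmem
    rw [addVal_algebraMap v ha] at h
    have hcount : (Associates.mk v.asIdeal).count (Associates.mk (Ideal.span {a})).factors ≠ 0 := by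
      exact_mod_cast h.ne'
    have hdvd : v.asIdeal ∣ Ideal.span {a} :=
      (Associates.count_ne_zero_iff_dvd (by simpa using ha) v.irreducible).mp hcount
    exact Ideal.dvd_span_singleton.mp hdvd
  · exact h.symm

theorem count_spanSingleton_algebraMap {a : R} (ha : a ≠ 0) :
    FractionalIdeal.count K v
      (FractionalIdeal.spanSingleton (nonZeroDivisors R) (algebraMap R K a))
      = addVal v (algebraMap R K a) := by
  rw [← FractionalIdeal.coeIdeal_span_singleton,
    FractionalIdeal.count_coe K v (by simpa using ha), addVal_algebraMap v ha]

theorem count_spanSingleton {x : K} (hx : x ≠ 0) :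
    FractionalIdeal.count K v (FractionalIdeal.spanSingleton (nonZeroDivisors R) x)
      = addVal v x := by
  obtain ⟨n, d, hd, hx'⟩ := IsFractionRing.div_surjective (A := R) (K := K) x
  have hd0 : d ≠ 0 := nonZeroDivisors.ne_zero hd
  have hdK : algebraMap R K d ≠ 0 :=
    (map_ne_zero_iff _ (IsFractionRing.injective R K)).mpr hd0
  have hn0 : n ≠ 0 := by
    rintro rfl
    rw [map_zero, zero_div] at hx'
    exact hx hx'.symm
  have hnK : algebraMap R K n ≠ 0 :=
    (map_ne_zero_iff _ (IsFractionRing.injective R K)).mpr hn0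
  have hmul : x * algebraMap R K d = algebraMap R K n := by
    rw [← hx', div_mul_cancel₀ _ hdK]
  have hspan : FractionalIdeal.spanSingleton (nonZeroDivisors R) x *
      FractionalIdeal.spanSingleton (nonZeroDivisors R) (algebraMap R K d) =
      FractionalIdeal.spanSingleton (nonZeroDivisors R) (algebraMap R K n) := by
    rw [FractionalIdeal.spanSingleton_mul_spanSingleton, hmul]
  have hc := congrArg (FractionalIdeal.count K v) hspan
  rw [FractionalIdeal.count_mul K v
      (by simpa [FractionalIdeal.spanSingleton_eq_zero_iff] using hx)
      (by simpa [FractionalIdeal.spanSingleton_eq_zero_iff] using hdK),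
    count_spanSingleton_algebraMap v hd0, count_spanSingleton_algebraMap v hn0] at hc
  have hv : addVal v x + addVal v (algebraMap R K d) = addVal v (algebraMap R K n) := by
    rw [← addVal_mul v hx hdK, hmul]
  omega

theorem ideal_dvd_of_count_le {M N : Ideal R} (hM : M ≠ 0) (hN : N ≠ 0)
    (h : ∀ v : HeightOneSpectrum R,
      (Associates.mk v.asIdeal).count (Associates.mk N).factors ≤
      (Associates.mk v.asIdeal).count (Associates.mk M).factors) : N ∣ M := by
  classical
  rw [UniqueFactorizationMonoid.dvd_iff_normalizedFactors_le_normalizedFactors hN hM, Multiset.le_iff_count]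
  intro J
  by_cases hJ : J ∈ UniqueFactorizationMonoid.normalizedFactors N
  · have hJp : Prime J := UniqueFactorizationMonoid.prime_of_normalized_factor J hJ
    have hJbot : J ≠ ⊥ := hJp.ne_zero
    have hJprime : J.IsPrime := Ideal.isPrime_of_prime hJp
    set v : HeightOneSpectrum R := ⟨J, hJprime, hJbot⟩
    have h1 := count_associates_factors_eq hN hJprime hJbot
    have h2 := count_associates_factors_eq hM hJprime hJbot
    have hv : (Associates.mk J).count (Associates.mk N).factors ≤
        (Associates.mk J).count (Associates.mk M).factors := h v
    omega
  · rw [Multiset.count_eq_zero_of_notMem hJ]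
    exact Nat.zero_le _

theorem le_one_of_count_nonneg {M : FractionalIdeal (nonZeroDivisors R) K} (hM : M ≠ 0)
    (h : ∀ v : HeightOneSpectrum R, 0 ≤ FractionalIdeal.count K v M) : M ≤ 1 := by
  obtain ⟨a, J, ha, haJ⟩ := FractionalIdeal.exists_eq_spanSingleton_mul M
  have hJ0 : J ≠ 0 := FractionalIdeal.ideal_factor_ne_zero hM haJ
  have hspan0 : Ideal.span ({a} : Set R) ≠ 0 := FractionalIdeal.constant_factor_ne_zero hM haJ
  have hcounts : ∀ v : HeightOneSpectrum R,
      (Associates.mk v.asIdeal).count (Associates.mk (Ideal.span {a})).factors ≤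
      (Associates.mk v.asIdeal).count (Associates.mk J).factors := by
    intro v
    have h1 := FractionalIdeal.count_well_defined K v hM haJ
    have h2 := h v
    rw [h1] at h2
    omega
  have hdvd : Ideal.span ({a} : Set R) ∣ J := ideal_dvd_of_count_le hJ0 hspan0 hcounts
  have hle : J ≤ Ideal.span {a} := Ideal.le_of_dvd hdvd
  have haK : algebraMap R K a ≠ 0 :=
    (map_ne_zero_iff _ (IsFractionRing.injective R K)).mpr ha
  calc M = FractionalIdeal.spanSingleton (nonZeroDivisors R) ((algebraMap R K a)⁻¹) * ↑J := haJ
    _ ≤ FractionalIdeal.spanSingleton (nonZeroDivisors R) ((algebraMap R K a)⁻¹) *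
        ↑(Ideal.span ({a} : Set R)) :=
      mul_le_mul_right ((FractionalIdeal.coeIdeal_le_coeIdeal K).mpr hle) _
    _ = 1 := by
      rw [FractionalIdeal.coeIdeal_span_singleton,
        FractionalIdeal.spanSingleton_mul_spanSingleton, inv_mul_cancel₀ haK,
        FractionalIdeal.spanSingleton_one]

theorem le_of_count_le {I J : FractionalIdeal (nonZeroDivisors R) K} (hI : I ≠ 0) (hJ : J ≠ 0)
    (h : ∀ v : HeightOneSpectrum R, FractionalIdeal.count K v J ≤ FractionalIdeal.count K v I) :
    I ≤ J := by
  have hJi : J⁻¹ ≠ 0 := inv_ne_zero hJ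
  have hM : I * J⁻¹ ≠ 0 := mul_ne_zero hI hJi
  have hMle : I * J⁻¹ ≤ 1 := by
    apply le_one_of_count_nonneg hM
    intro v
    rw [FractionalIdeal.count_mul K v hI hJi, FractionalIdeal.count_inv]
    have := h v
    omega
  have : J * (I * J⁻¹) ≤ J * 1 := mul_le_mul_right hMle _
  rwa [mul_one, mul_comm I J⁻¹, ← mul_assoc, mul_inv_cancel₀ hJ, one_mul] at this

end Aux

section NF

variable {K : Type*} [Field K] [NumberField K]

theorem natCast_RingOfIntegers_ne_zero {p : ℕ} (hp : p ≠ 0) : (p : 𝓞 K) ≠ 0 :=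
  Nat.cast_ne_zero.mpr hp

example : Algebra.IsIntegral ℤ (𝓞 K) := inferInstance

theorem exists_heightOneSpectrum_over (p : ℕ) (hp : p.Prime) :
    ∃ Q : HeightOneSpectrum (𝓞 K), (p : 𝓞 K) ∈ Q.asIdeal := by
  have hPprime : (Ideal.span {(p : ℤ)}).IsPrime := by
    rw [Ideal.span_singleton_prime (by exact_mod_cast hp.ne_zero)]
    exact Nat.prime_iff_prime_int.mp hp
  have hker : RingHom.ker (algebraMap ℤ (𝓞 K)) ≤ Ideal.span {(p : ℤ)} := by
    intro x hx
    have : (x : 𝓞 K) = 0 := by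
      simpa [algebraMap_int_eq] using hx
    have : x = 0 := by exact_mod_cast this
    simp [this]
  obtain ⟨Q, hQprime, hQcomap⟩ :=
    Ideal.exists_ideal_over_prime_of_isIntegral_of_isDomain (R := ℤ) (S := 𝓞 K)
      (Ideal.span {(p : ℤ)}) hker
  have hpQ : (p : 𝓞 K) ∈ Q := by
    have h1 : (p : ℤ) ∈ Ideal.span {(p : ℤ)} := Ideal.mem_span_singleton_self _
    rw [← hQcomap] at h1
    simpa [algebraMap_int_eq] using h1
  have hQbot : Q ≠ ⊥ := by
    intro h
    rw [h] at hpQ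
    exact natCast_RingOfIntegers_ne_zero (K := K) hp.ne_zero (by simpa using hpQ)
  exact ⟨⟨Q, hQprime, hQbot⟩, hpQ⟩

theorem not_mem_of_ne_prime {p q : ℕ} (hp : p.Prime) (hq : q.Prime) (hne : q ≠ p)
    (Q : HeightOneSpectrum (𝓞 K)) (hmem : (p : 𝓞 K) ∈ Q.asIdeal) :
    (q : 𝓞 K) ∉ Q.asIdeal := by
  intro hqmem
  have hcop : IsCoprime (q : ℤ) (p : ℤ) :=
    Int.isCoprime_iff_gcd_eq_one.mpr (by exact_mod_cast (Nat.coprime_primes hq hp).mpr hne)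
  have hcop2 : IsCoprime (q : 𝓞 K) (p : 𝓞 K) := by
    have := hcop.map (algebraMap ℤ (𝓞 K))
    simpa [algebraMap_int_eq] using this
  obtain ⟨a, b, hab⟩ := hcop2
  have : (1 : 𝓞 K) ∈ Q.asIdeal := by
    rw [← hab]
    exact Ideal.add_mem _ (Ideal.mul_mem_left _ _ hqmem) (Ideal.mul_mem_left _ _ hmem)
  exact Q.isPrime.ne_top (Ideal.eq_top_of_isUnit_mem _ this isUnit_one)

end NF

section Aux2

variable {R : Type*} [CommRing R] [IsDedekindDomain R]
    {K : Type*} [Field K] [Algebra R K] [IsFractionRing R K]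
    (v : HeightOneSpectrum R)

theorem valuation_lt_valuation_iff {x y : K} (hx : x ≠ 0) (hy : y ≠ 0) :
    v.valuation K x < v.valuation K y ↔ addVal v y < addVal v x := by
  rw [valuation_eq_addVal v hx, valuation_eq_addVal v hy, WithZero.coe_lt_coe,
    Multiplicative.ofAdd_lt, neg_lt_neg_iff]

end Aux2

/-- two-element representation of a general fractional ideal
`Π_{p∈Ps} 𝔞_p = (Π_p p^{H_p})·ℤ_K + (Σ_p (Π_{q≠p} q^{H_q+1})·α_p)·ℤ_K`. -/
theorem stmt6 (K : Type*) [Field K] [NumberField K]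
    (Ps : Finset ℕ) (hPs : ∀ p ∈ Ps, p.Prime)
    (𝔞 : ℕ → FractionalIdeal (nonZeroDivisors (𝓞 K)) K)
    (h𝔞 : ∀ p ∈ Ps, 𝔞 p ≠ 0)
    (hsupp : ∀ p ∈ Ps, ∀ Q : HeightOneSpectrum (𝓞 K), (p : 𝓞 K) ∉ Q.asIdeal →
      FractionalIdeal.count K Q (𝔞 p) = 0)
    (α : ℕ → K) (hα : ∀ p ∈ Ps, α p ≠ 0)
    (hvα : ∀ p ∈ Ps, ∀ Q : HeightOneSpectrum (𝓞 K), (p : 𝓞 K) ∈ Q.asIdeal →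
      addVal Q (α p) = FractionalIdeal.count K Q (𝔞 p))
    (hvα' : ∀ p ∈ Ps, ∀ Q : HeightOneSpectrum (𝓞 K), (p : 𝓞 K) ∉ Q.asIdeal →
      0 ≤ addVal Q (α p))
    (H : ℕ → ℤ)
    (hH : ∀ p ∈ Ps, ∀ Q : HeightOneSpectrum (𝓞 K), (p : 𝓞 K) ∈ Q.asIdeal →
      FractionalIdeal.count K Q (𝔞 p) ≤ H p * addVal Q ((p : K))) :
    ∏ p ∈ Ps, 𝔞 p =
      FractionalIdeal.spanSingleton (nonZeroDivisors (𝓞 K))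
          (∏ p ∈ Ps, (p : K) ^ (H p)) +
        FractionalIdeal.spanSingleton (nonZeroDivisors (𝓞 K))
          (∑ p ∈ Ps, (∏ q ∈ Ps.erase p, (q : K) ^ (H q + 1)) * α p) := by
  classical
  rcases Ps.eq_empty_or_nonempty with rfl | hne
  · simp
  obtain ⟨p₀, hp₀⟩ := hne
  set t : ℕ → K := fun p => (∏ q ∈ Ps.erase p, (q : K) ^ (H q + 1)) * α p with ht
  set g : K := ∏ p ∈ Ps, (p : K) ^ (H p) with hg
  set s : K := ∑ p ∈ Ps, t p with hs
  -- basic nonvanishing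
  have hKp : ∀ p ∈ Ps, (p : K) ≠ 0 := fun p hp => Nat.cast_ne_zero.mpr (hPs p hp).ne_zero
  have hRp : ∀ p ∈ Ps, (p : 𝓞 K) ≠ 0 := fun p hp => Nat.cast_ne_zero.mpr (hPs p hp).ne_zero
  have hcast : ∀ p : ℕ, (p : K) = algebraMap (𝓞 K) K ((p : 𝓞 K)) := fun p => (map_natCast _ p).symm
  have htne : ∀ p ∈ Ps, t p ≠ 0 := by
    intro p hp
    refine mul_ne_zero ?_ (hα p hp)
    exact Finset.prod_ne_zero_iff.mpr fun q hq =>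
      zpow_ne_zero _ (hKp q (Finset.mem_of_mem_erase hq))
  have hgne : g ≠ 0 :=
    Finset.prod_ne_zero_iff.mpr fun p hp => zpow_ne_zero _ (hKp p hp)
  have hA : (∏ p ∈ Ps, 𝔞 p) ≠ 0 := Finset.prod_ne_zero_iff.mpr h𝔞
  -- valuations of primes not below Q
  have hval0 : ∀ (Q : HeightOneSpectrum (𝓞 K)), ∀ q ∈ Ps, (q : 𝓞 K) ∉ Q.asIdeal →
      addVal Q ((q : K)) = 0 := by
    intro Q q hq hnm
    rw [hcast q]
    exact addVal_algebraMap_eq_zero Q (hRp q hq) hnm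
  have hvalpos : ∀ (Q : HeightOneSpectrum (𝓞 K)), ∀ q ∈ Ps, (q : 𝓞 K) ∈ Q.asIdeal →
      0 < addVal Q ((q : K)) := by
    intro Q q hq hm
    rw [hcast q]
    exact addVal_algebraMap_pos Q (hRp q hq) hm
  have huniq : ∀ (Q : HeightOneSpectrum (𝓞 K)), ∀ p ∈ Ps, (p : 𝓞 K) ∈ Q.asIdeal →
      ∀ q ∈ Ps, q ≠ p → (q : 𝓞 K) ∉ Q.asIdeal := by
    intro Q p hp hmem q hq hne
    exact not_mem_of_ne_prime (hPs p hp) (hPs q hq) hne Q hmem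
  -- value of t p at a prime Q over p₁ ∈ Ps
  have htval₁ : ∀ (Q : HeightOneSpectrum (𝓞 K)), ∀ p₁ ∈ Ps, (p₁ : 𝓞 K) ∈ Q.asIdeal →
      addVal Q (t p₁) = FractionalIdeal.count K Q (𝔞 p₁) := by
    intro Q p₁ hp₁ hmem
    rw [ht]
    rw [addVal_mul Q (Finset.prod_ne_zero_iff.mpr fun q hq =>
        zpow_ne_zero _ (hKp q (Finset.mem_of_mem_erase hq))) (hα p₁ hp₁)]
    rw [addVal_prod Q _ _ (fun q hq => zpow_ne_zero _ (hKp q (Finset.mem_of_mem_erase hq)))]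
    rw [Finset.sum_eq_zero, hvα p₁ hp₁ Q hmem, zero_add]
    intro q hq
    rw [addVal_zpow Q (hKp q (Finset.mem_of_mem_erase hq)),
      hval0 Q q (Finset.mem_of_mem_erase hq)
        (huniq Q p₁ hp₁ hmem q (Finset.mem_of_mem_erase hq) (Finset.ne_of_mem_erase hq)),
      mul_zero]
  have htval₂ : ∀ (Q : HeightOneSpectrum (𝓞 K)), ∀ p₁ ∈ Ps, (p₁ : 𝓞 K) ∈ Q.asIdeal →
      ∀ p ∈ Ps, p ≠ p₁ →
      (H p₁ + 1) * addVal Q ((p₁ : K)) ≤ addVal Q (t p) := by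
    intro Q p₁ hp₁ hmem p hp hne
    rw [ht]
    rw [addVal_mul Q (Finset.prod_ne_zero_iff.mpr fun q hq =>
        zpow_ne_zero _ (hKp q (Finset.mem_of_mem_erase hq))) (hα p hp)]
    rw [addVal_prod Q _ _ (fun q hq => zpow_ne_zero _ (hKp q (Finset.mem_of_mem_erase hq)))]
    have hsum : ∑ q ∈ Ps.erase p, addVal Q ((q : K) ^ (H q + 1)) =
        (H p₁ + 1) * addVal Q ((p₁ : K)) := by
      rw [Finset.sum_eq_single_of_mem p₁ (Finset.mem_erase.mpr ⟨hne.symm, hp₁⟩)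
        (fun q hq hq₁ => by
          rw [addVal_zpow Q (hKp q (Finset.mem_of_mem_erase hq)),
            hval0 Q q (Finset.mem_of_mem_erase hq)
              (huniq Q p₁ hp₁ hmem q (Finset.mem_of_mem_erase hq) hq₁), mul_zero]),
        addVal_zpow Q (hKp p₁ hp₁)]
    rw [hsum]
    have h1 := hvα' p hp Q (huniq Q p₁ hp₁ hmem p hp hne)
    linarith
  -- strict comparison and the value of s at primes over p₁
  have keyB : ∀ (Q : HeightOneSpectrum (𝓞 K)), ∀ p₁ ∈ Ps, (p₁ : 𝓞 K) ∈ Q.asIdeal →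
      s ≠ 0 ∧ addVal Q s = FractionalIdeal.count K Q (𝔞 p₁) := by
    intro Q p₁ hp₁ hmem
    have he : 0 < addVal Q ((p₁ : K)) := hvalpos Q p₁ hp₁ hmem
    have hlt : ∀ p ∈ Ps.erase p₁, addVal Q (t p₁) < addVal Q (t p) := by
      intro p hp
      have h1 := htval₂ Q p₁ hp₁ hmem p (Finset.mem_of_mem_erase hp) (Finset.ne_of_mem_erase hp)
      have h2 := htval₁ Q p₁ hp₁ hmem
      have h3 := hH p₁ hp₁ Q hmem
      rw [h2]
      have : H p₁ * addVal Q ((p₁ : K)) < (H p₁ + 1) * addVal Q ((p₁ : K)) := by nlinarith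
      linarith
    have hvlt : ∀ p ∈ Ps.erase p₁, Q.valuation K (t p) < Q.valuation K (t p₁) := by
      intro p hp
      exact (valuation_lt_valuation_iff Q (htne p (Finset.mem_of_mem_erase hp))
        (htne p₁ hp₁)).mpr (hlt p hp)
    have hvs : Q.valuation K s = Q.valuation K (t p₁) := by
      rw [hs, ← Finset.add_sum_erase Ps t hp₁]
      exact Valuation.map_add_eq_of_lt_left _
        (Valuation.map_sum_lt _ (valuation_ne_zero Q (htne p₁ hp₁)) hvlt)
    have hsne : s ≠ 0 := by
      intro h
      rw [h, Valuation.map_zero] at hvs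
      exact valuation_ne_zero Q (htne p₁ hp₁) hvs.symm
    refine ⟨hsne, ?_⟩
    rw [← htval₁ Q p₁ hp₁ hmem]
    exact addVal_eq_of_valuation Q hsne
      (hvs.trans (valuation_eq_addVal Q (htne p₁ hp₁)))
  have hsne : s ≠ 0 := by
    obtain ⟨Q₀, hQ₀⟩ := exists_heightOneSpectrum_over (K := K) p₀ (hPs p₀ hp₀)
    exact (keyB Q₀ p₀ hp₀ hQ₀).1
  -- the three inequalities at every prime Q
  have key : ∀ Q : HeightOneSpectrum (𝓞 K),
      FractionalIdeal.count K Q (∏ p ∈ Ps, 𝔞 p) ≤ addVal Q g ∧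
      FractionalIdeal.count K Q (∏ p ∈ Ps, 𝔞 p) ≤ addVal Q s ∧
      min (addVal Q g) (addVal Q s) ≤ FractionalIdeal.count K Q (∏ p ∈ Ps, 𝔞 p) := by
    intro Q
    have hcA : FractionalIdeal.count K Q (∏ p ∈ Ps, 𝔞 p) =
        ∑ p ∈ Ps, FractionalIdeal.count K Q (𝔞 p) :=
      FractionalIdeal.count_prod K Q Ps 𝔞 h𝔞
    have hgv : addVal Q g = ∑ p ∈ Ps, H p * addVal Q ((p : K)) := by
      rw [hg, addVal_prod Q _ _ (fun p hp => zpow_ne_zero _ (hKp p hp))]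
      exact Finset.sum_congr rfl fun p hp => addVal_zpow Q (hKp p hp) (H p)
    by_cases hQ : ∃ p₁ ∈ Ps, (p₁ : 𝓞 K) ∈ Q.asIdeal
    · obtain ⟨p₁, hp₁, hmem⟩ := hQ
      have hcA₁ : FractionalIdeal.count K Q (∏ p ∈ Ps, 𝔞 p) =
          FractionalIdeal.count K Q (𝔞 p₁) := by
        rw [hcA]
        exact Finset.sum_eq_single_of_mem p₁ hp₁ fun p hp hnep =>
          hsupp p hp Q (huniq Q p₁ hp₁ hmem p hp hnep)
      have hgv₁ : addVal Q g = H p₁ * addVal Q ((p₁ : K)) := by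
        rw [hgv]
        exact Finset.sum_eq_single_of_mem p₁ hp₁ fun p hp hnep => by
          rw [hval0 Q p hp (huniq Q p₁ hp₁ hmem p hp hnep), mul_zero]
      have hsv₁ : addVal Q s = FractionalIdeal.count K Q (𝔞 p₁) := (keyB Q p₁ hp₁ hmem).2
      have h3 := hH p₁ hp₁ Q hmem
      refine ⟨by omega, by omega, ?_⟩
      rw [hcA₁, hsv₁]
      exact min_le_right _ _
    · push_neg at hQ
      have hcA₀ : FractionalIdeal.count K Q (∏ p ∈ Ps, 𝔞 p) = 0 := by
        rw [hcA]
        exact Finset.sum_eq_zero fun p hp => hsupp p hp Q (hQ p hp)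
      have hgv₀ : addVal Q g = 0 := by
        rw [hgv]
        exact Finset.sum_eq_zero fun p hp => by rw [hval0 Q p hp (hQ p hp), mul_zero]
      have hsv₀ : 0 ≤ addVal Q s := by
        rw [le_addVal_iff Q hsne 0]
        apply Valuation.map_sum_le
        intro p hp
        rw [← le_addVal_iff Q (htne p hp) 0]
        rw [ht]
        rw [addVal_mul Q (Finset.prod_ne_zero_iff.mpr fun q hq =>
            zpow_ne_zero _ (hKp q (Finset.mem_of_mem_erase hq))) (hα p hp)]
        rw [addVal_prod Q _ _ (fun q hq => zpow_ne_zero _ (hKp q (Finset.mem_of_mem_erase hq)))]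
        have h1 : ∑ q ∈ Ps.erase p, addVal Q ((q : K) ^ (H q + 1)) = 0 :=
          Finset.sum_eq_zero fun q hq => by
            rw [addVal_zpow Q (hKp q (Finset.mem_of_mem_erase hq)),
              hval0 Q q (Finset.mem_of_mem_erase hq) (hQ q (Finset.mem_of_mem_erase hq)),
              mul_zero]
        have h2 := hvα' p hp Q (hQ p hp)
        omega
      exact ⟨by omega, by omega, by omega⟩
  -- assemble
  set G := FractionalIdeal.spanSingleton (nonZeroDivisors (𝓞 K)) g with hG
  set S := FractionalIdeal.spanSingleton (nonZeroDivisors (𝓞 K)) s with hS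
  have hGne : G ≠ 0 := by
    rw [hG, Ne, FractionalIdeal.spanSingleton_eq_zero_iff]
    exact hgne
  have hSne : S ≠ 0 := by
    rw [hS, Ne, FractionalIdeal.spanSingleton_eq_zero_iff]
    exact hsne
  have hGScount : ∀ Q : HeightOneSpectrum (𝓞 K),
      FractionalIdeal.count K Q G = addVal Q g ∧ FractionalIdeal.count K Q S = addVal Q s :=
    fun Q => ⟨count_spanSingleton Q hgne, count_spanSingleton Q hsne⟩
  have hGle : G ≤ G + S := by rw [← FractionalIdeal.sup_eq_add]; exact le_sup_left
  have hSle : S ≤ G + S := by rw [← FractionalIdeal.sup_eq_add]; exact le_sup_right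
  have hGSne : G + S ≠ 0 := by
    intro h
    exact hGne (le_antisymm (h ▸ hGle) (FractionalIdeal.zero_le G))
  apply le_antisymm
  · apply le_of_count_le hA hGSne
    intro Q
    have h1 : FractionalIdeal.count K Q (G + S) ≤ FractionalIdeal.count K Q G :=
      FractionalIdeal.count_mono K Q hGne hGle
    have h2 : FractionalIdeal.count K Q (G + S) ≤ FractionalIdeal.count K Q S :=
      FractionalIdeal.count_mono K Q hSne hSle
    have h3 := (key Q).2.2
    have h4 := (hGScount Q).1
    have h5 := (hGScount Q).2
    omega
  · rw [← FractionalIdeal.sup_eq_add]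
    apply sup_le
    · apply le_of_count_le hGne hA
      intro Q
      rw [(hGScount Q).1]
      exact (key Q).1
    · apply le_of_count_le hSne hA
      intro Q
      rw [(hGScount Q).2]
      exact (key Q).2.1
end

section
/- Let p be a prime number, L a finite extension of ℚ_p of degree n, O_L the integral closure of ℤ_p in L, and θ ∈ O_L with L = ℚ_p(θ). Suppose g_0 = 1, g_1, …, g_{n−1} ∈ ℤ_p[x] are monic polynomials with deg g_m = m for all 0 ≤ m < n, and 0 = ν_0 ≤ ν_1 ≤ ⋯ ≤ ν_{n−1} are integers such that the family (g_m(θ)/p^{ν_m})_{0 ≤ m < n} is a ℤ_p-basis of O_L. Then ν_{n−1} is the least nonnegative integer N such that p^N·O_L ⊆ ℤ_p[θ]. -/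
open scoped Polynomial

/-- if `(g_m(θ)/p^{ν_m})_{0 ≤ m < n}` is a triangular ℤ_p-basis of the ring of
integers `O_L` of `L = ℚ_p(θ)` (with `g_m` monic of degree `m`, `g_0 = 1`, and
`0 = ν_0 ≤ ⋯ ≤ ν_{n−1}`), then `ν_{n−1}` is the least nonnegative integer `N` with
`p^N·O_L ⊆ ℤ_p[θ]`. -/
theorem stmt9 (p : ℕ) [Fact p.Prime] (L : Type*) [Field L] [Algebra ℚ_[p] L]
    [FiniteDimensional ℚ_[p] L] [Algebra ℤ_[p] L] [IsScalarTower ℤ_[p] ℚ_[p] L]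
    (n : ℕ) (hn : 0 < n) (hdim : Module.finrank ℚ_[p] L = n)
    (θ : integralClosure ℤ_[p] L) (hθ : Algebra.adjoin ℚ_[p] {(θ : L)} = ⊤)
    (g : ℕ → ℤ_[p][X]) (hg0 : g 0 = 1)
    (hmonic : ∀ m < n, (g m).Monic) (hdeg : ∀ m < n, (g m).natDegree = m)
    (ν : ℕ → ℤ) (hν0 : ν 0 = 0)
    (hνmono : ∀ m m' : ℕ, m ≤ m' → m' < n → ν m ≤ ν m')
    (B : Module.Basis (Fin n) ℤ_[p] (integralClosure ℤ_[p] L))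
    (hB : ∀ m : Fin n,
      (B m : L) = Polynomial.aeval (θ : L) (g (m : ℕ)) / (p : L) ^ (ν (m : ℕ))) :
    IsLeast {N : ℤ | 0 ≤ N ∧ ∀ x : integralClosure ℤ_[p] L,
      (p : L) ^ N * (x : L) ∈ Algebra.adjoin ℤ_[p] {(θ : L)}} (ν (n - 1)) := by
  have hpp : p.Prime := Fact.out
  set t : L := (θ : L) with ht
  have hchar : CharZero L := charZero_of_injective_algebraMap (algebraMap ℚ_[p] L).injective
  have hp0 : (p : L) ≠ 0 := Nat.cast_ne_zero.mpr hpp.ne_zero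
  have htZ : IsIntegral ℤ_[p] t := θ.2
  have hνnn : ∀ m < n, 0 ≤ ν m := by
    intro m hm
    have := hνmono 0 m (Nat.zero_le m) hm
    omega
  have hpow : ∀ a : ℤ, 0 ≤ a → (p : L) ^ a = algebraMap ℤ_[p] L ((p : ℤ_[p]) ^ a.toNat) := by
    intro a ha
    rw [map_pow, map_natCast, ← zpow_natCast, Int.toNat_of_nonneg ha]
  -- degree of minimal polynomials
  have htQ : IsIntegral ℚ_[p] t := IsIntegral.of_finite _ _
  have hdegQ : (minpoly ℚ_[p] t).natDegree = n := by
    have h1 : IntermediateField.adjoin ℚ_[p] {t} = ⊤ := by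
      apply IntermediateField.toSubalgebra_injective
      rw [IntermediateField.adjoin_simple_toSubalgebra_of_isAlgebraic htQ.isAlgebraic, hθ]
      rfl
    have h2 := IntermediateField.adjoin.finrank htQ
    rw [h1] at h2
    rw [← h2, ← hdim]
    exact IntermediateField.finrank_top'
  set μ : ℤ_[p][X] := minpoly ℤ_[p] t with hμ
  have hmonicμ : μ.Monic := minpoly.monic htZ
  have haevalμ : Polynomial.aeval t μ = 0 := minpoly.aeval _ _
  have hdegμ : μ.natDegree = n := by
    have hmap : minpoly ℚ_[p] t = μ.map (algebraMap ℤ_[p] ℚ_[p]) := by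
      have := minpoly.isIntegrallyClosed_eq_field_fractions ℚ_[p] L htZ (s := t)
      simpa using this
    rw [hmap, hmonicμ.natDegree_map] at hdegQ
    exact hdegQ
  set v : Fin n → L := fun m => Polynomial.aeval t (g (m : ℕ)) with hv
  set M : Submodule ℤ_[p] L := Submodule.span ℤ_[p] (Set.range v) with hM
  have claim1 : ∀ i, i < n → t ^ i ∈ M := by
    intro i
    induction i using Nat.strong_induction_on with
    | _ i ih =>
      intro hi
      have hsum : Polynomial.aeval t (g i) =
          ∑ j ∈ Finset.range (i + 1), (g i).coeff j • t ^ j := by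
        rw [Polynomial.aeval_eq_sum_range, hdeg i hi]
      have hcoef : (g i).coeff i = 1 := by
        have h := (hmonic i hi).coeff_natDegree
        rwa [hdeg i hi] at h
      have h2 : t ^ i = Polynomial.aeval t (g i)
          - ∑ j ∈ Finset.range i, (g i).coeff j • t ^ j := by
        rw [hsum, Finset.sum_range_succ, hcoef, one_smul, add_sub_cancel_left]
      rw [h2]
      refine sub_mem ?_ (Submodule.sum_mem _ fun j hj => Submodule.smul_mem _ _ ?_)
      · exact Submodule.subset_span ⟨⟨i, hi⟩, rfl⟩
      · rw [Finset.mem_range] at hj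
        exact ih j hj (lt_trans hj hi)
  have hnpow : t ^ n = -∑ j ∈ Finset.range n, μ.coeff j • t ^ j := by
    have hcn : μ.coeff n = 1 := by
      have h := hmonicμ.coeff_natDegree
      rwa [hdegμ] at h
    have h0 := Polynomial.aeval_eq_sum_range (p := μ) t
    rw [haevalμ, hdegμ, Finset.sum_range_succ, hcn, one_smul] at h0
    exact eq_neg_of_add_eq_zero_right h0.symm
  have claim2 : ∀ k, t ^ k ∈ M := by
    intro k
    induction k using Nat.strong_induction_on with
    | _ k ih =>
      rcases lt_or_ge k n with hk | hk
      · exact claim1 k hk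
      · have hsplit : t ^ k = t ^ (k - n) * t ^ n := by
          rw [← pow_add]
          congr 1
          omega
        rw [hsplit, hnpow, mul_neg, Finset.mul_sum]
        refine neg_mem (Submodule.sum_mem _ fun j hj => ?_)
        rw [Finset.mem_range] at hj
        rw [mul_smul_comm, ← pow_add]
        exact Submodule.smul_mem _ _ (ih (k - n + j) (by omega))
  have claim3 : ∀ q : ℤ_[p][X], Polynomial.aeval t q ∈ M := by
    intro q
    rw [Polynomial.aeval_eq_sum_range]
    exact Submodule.sum_mem _ fun j _ => Submodule.smul_mem _ _ (claim2 j)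
  have hBmul : ∀ m : Fin n,
      Polynomial.aeval t (g (m : ℕ)) = (B m : L) * (p : L) ^ (ν (m : ℕ)) := by
    intro m
    have hpν : (p : L) ^ (ν (m : ℕ)) ≠ 0 := zpow_ne_zero _ hp0
    rw [hB m, div_mul_cancel₀ _ hpν]
  constructor
  · refine ⟨hνnn (n - 1) (by omega), fun x => ?_⟩
    rw [Algebra.adjoin_singleton_eq_range_aeval]
    have hx := B.sum_repr x
    have hxL : (x : L) = ∑ m : Fin n, (B.repr x m) • (B m : L) := by
      conv_lhs => rw [← hx]
      push_cast
      rfl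
    rw [hxL, Finset.mul_sum]
    refine Subalgebra.sum_mem _ fun m _ => ?_
    rw [mul_smul_comm]
    refine Subalgebra.smul_mem _ ?_ _
    have hle : ν (m : ℕ) ≤ ν (n - 1) := hνmono m (n - 1) (by omega) (by omega)
    set e : ℕ := (ν (n - 1) - ν (m : ℕ)).toNat with he
    have hee : (e : ℤ) = ν (n - 1) - ν (m : ℕ) := Int.toNat_of_nonneg (by omega)
    have hpν : (p : L) ^ (ν (m : ℕ)) ≠ 0 := zpow_ne_zero _ hp0
    have hcompute : (p : L) ^ (ν (n - 1)) * (B m : L)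
        = algebraMap ℤ_[p] L ((p : ℤ_[p]) ^ e) * Polynomial.aeval t (g (m : ℕ)) := by
      rw [map_pow, map_natCast, hB m, mul_div_assoc', div_eq_iff hpν, mul_right_comm,
        ← zpow_natCast (p : L) e, ← zpow_add₀ hp0, hee, sub_add_cancel]
    rw [hcompute]
    exact ⟨Polynomial.C ((p : ℤ_[p]) ^ e) * g (m : ℕ), by simp [map_mul]⟩
  · rintro N ⟨hN0, hN⟩
    by_contra hlt
    push_neg at hlt
    set last : Fin n := ⟨n - 1, by omega⟩ with hlast
    have hmem := hN (B last)
    rw [Algebra.adjoin_singleton_eq_range_aeval] at hmem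
    obtain ⟨q, hq⟩ := hmem
    have hqM : (p : L) ^ N * (B last : L) ∈ M := hq ▸ claim3 q
    rw [hM, Submodule.mem_span_range_iff_exists_fun] at hqM
    obtain ⟨c, hc⟩ := hqM
    have hterm : ∀ m : Fin n, c m • v m
        = (((c m * (p : ℤ_[p]) ^ (ν (m : ℕ)).toNat) • B m : integralClosure ℤ_[p] L) : L) := by
      intro m
      show c m • Polynomial.aeval t (g (m : ℕ)) = _
      rw [SetLike.val_smul, hBmul m, hpow (ν (m : ℕ)) (hνnn _ m.2), Algebra.smul_def,
        Algebra.smul_def, map_mul]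
      ring
    have hOL : (∑ m : Fin n, (c m * (p : ℤ_[p]) ^ (ν (m : ℕ)).toNat) • B m)
        = ((p : ℤ_[p]) ^ N.toNat) • B last := by
      apply Subtype.coe_injective
      beta_reduce
      rw [AddSubmonoidClass.coe_finset_sum, SetLike.val_smul]
      calc (∑ m : Fin n,
            (((c m * (p : ℤ_[p]) ^ (ν (m : ℕ)).toNat) • B m : integralClosure ℤ_[p] L) : L))
          = ∑ m : Fin n, c m • v m := Finset.sum_congr rfl fun m _ => (hterm m).symm
        _ = (p : L) ^ N * (B last : L) := hc
        _ = ((p : ℤ_[p]) ^ N.toNat) • (B last : L) := by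
            rw [hpow N hN0, Algebra.smul_def]
    have hrep := congrArg (fun z => (B.repr z) last) hOL
    simp only [Module.Basis.repr_sum_self, map_smul, Module.Basis.repr_self, Finsupp.smul_single,
      smul_eq_mul, mul_one, Finsupp.single_eq_same] at hrep
    have hdvd : (p : ℤ_[p]) ^ (ν (n - 1)).toNat ∣ (p : ℤ_[p]) ^ N.toNat := by
      refine ⟨c last, ?_⟩
      rw [← hrep]
      ring
    have hle' := (pow_dvd_pow_iff (PadicInt.prime_p).ne_zero
      (PadicInt.prime_p).not_unit).mp hdvd
    have h1 : 0 ≤ ν (n - 1) := hνnn (n - 1) (by omega)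
    omega
end
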